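/- Let G = V ⋊_ψ D with V = Z_p^d, p ∤ |D|, and ψ irreducible non-trivial. Set A = Aut(G). Then A = Inn_G(V) ⋊ N_A(D), where Inn_G(V) (the group of inner automorphisms induced by elements of V) is isomorphic to V and is normal in A. -/

import Mathlib

open Pointwise

/-- The canonical homomorphism `AddAut V →* MulAut (Multiplicative V)`. -/
def addAutToMulAut {V : Type*} [AddGroup V] :
    Multiplicative (AddAut V) →* MulAut (Multiplicative V) :=
  MonoidHom.mk' (fun e => AddEquiv.toMultiplicative e.toAdd) (fun e₁ e₂ => by ext x; rfl)

instance multAddAutCoeFun {V : Type*} [AddGroup V] :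
    CoeFun (Multiplicative (AddAut V)) (fun _ => V → V) := ⟨fun e => e.toAdd⟩

@[simp]
theorem addAutToMulAut_apply' {V : Type*} [AddGroup V] (e : Multiplicative (AddAut V))
    (x : Multiplicative V) :
    addAutToMulAut e x = Multiplicative.ofAdd (e.toAdd (Multiplicative.toAdd x)) := rfl

set_option linter.unusedSectionVars false
section Aux

open SemidirectProduct

variable (p : ℕ) [Fact p.Prime]
    (V : Type) [AddCommGroup V] [Finite V] (hV : ∀ v : V, p • v = 0)
    (D : Type) [Group D] [Finite D] (hpD : ¬ p ∣ Nat.card D)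
    (ψ : D →* Multiplicative (AddAut V))

local notation "φ" => addAutToMulAut.comp ψ
local notation "G" => Multiplicative V ⋊[addAutToMulAut.comp ψ] D

-- fixed points are trivial
theorem aux_fix
    (hirr : ∀ W : AddSubgroup V, (∀ g, ∀ v ∈ W, ψ g v ∈ W) → W = ⊥ ∨ W = ⊤)
    (hnt : ∃ g v, ψ g v ≠ v) :
    ∀ x : V, (∀ d, ψ d x = x) → x = 0 := by
  intro x hx
  set W : AddSubgroup V :=
    { carrier := {y | ∀ d, ψ d y = y}
      zero_mem' := by simp
      add_mem' := by intro a b ha hb d; simp [map_add, ha d, hb d]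
      neg_mem' := by intro a ha d; simp [map_neg, ha d] } with hW
  rcases hirr W (fun g v hv d => by simp only [hW] at hv ⊢; simp [hv d, hv g]) with h | h
  · have : x ∈ W := hx
    rw [h] at this
    exact this
  · exfalso
    obtain ⟨g, v, hgv⟩ := hnt
    have : v ∈ W := h ▸ AddSubgroup.mem_top v
    exact hgv (this g)

include hpD in
theorem aux_D1 (d : D) (hd : d ^ p = 1) : d = 1 := by
  have h1 : orderOf d ∣ p := orderOf_dvd_of_pow_eq_one hd
  have h2 : orderOf d ∣ Nat.card D := orderOf_dvd_natCard d
  rcases (Nat.Prime.eq_one_or_self_of_dvd (Fact.out) _ h1) with h | h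
  · exact orderOf_eq_one_iff.mp h
  · exact absurd (h ▸ h2) hpD

include hV in
theorem aux_pow (u : Multiplicative V) : u ^ p = 1 := by
  have : Multiplicative.toAdd (u ^ p) = Multiplicative.toAdd (1 : Multiplicative V) := by
    simp [toAdd_pow, hV]
  exact Multiplicative.toAdd.injective this

include hV hpD in
theorem aux_mem_inl (x : G) (hx : x ^ p = 1) : x ∈ (inl : Multiplicative V →* G).range := by
  have h1 : x.right ^ p = 1 := by
    have := congrArg SemidirectProduct.rightHom hx
    simpa [map_pow] using this
  have h2 : x.right = 1 := aux_D1 p D hpD x.right h1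
  refine ⟨x.left, ?_⟩
  conv_rhs => rw [← inl_left_mul_inr_right x]
  rw [h2, map_one, mul_one]

theorem aux_conj_conj {H : Type*} [Group H] (g : MulAut H) (a : H) :
    g * MulAut.conj a * g⁻¹ = MulAut.conj (g a) := by
  ext x
  simp [MulAut.conj_apply, MulAut.mul_apply, map_mul, map_inv, MulAut.inv_def]

theorem aux_conj_inr (u : Multiplicative V) (d : D) :
    MulAut.conj ((inl u : G)) (inr d) = inl (u * ((φ) d u)⁻¹) * inr d := by
  ext
  · simp [MulAut.conj_apply, SemidirectProduct.mul_left, SemidirectProduct.mul_right,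
      SemidirectProduct.inv_left, SemidirectProduct.inv_right]
  · simp [MulAut.conj_apply, SemidirectProduct.mul_right, SemidirectProduct.inv_right]


include hV hpD in
theorem aux_sup (f : MulAut G) :
    ∃ v : Multiplicative V,
      (MulAut.conj (inl v : G))⁻¹ * f ∈
        MulAction.stabilizer (MulAut G) ((inr.range : Subgroup G)) := by
  classical
  cases nonempty_fintype D
  have hφ : ∀ (d : D) (x : Multiplicative V),
      (addAutToMulAut.comp ψ) d x = Multiplicative.ofAdd (ψ d (Multiplicative.toAdd x)) :=
    fun _ _ => rfl
  set r : D →* D := SemidirectProduct.rightHom.comp (f.toMonoidHom.comp inr) with hr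
  have hrinj : Function.Injective r := by
    rw [injective_iff_map_eq_one]
    intro d hd
    have h1 : (f (inr d)) ^ p = 1 := by
      obtain ⟨l, hl⟩ : f (inr d) ∈ (inl : Multiplicative V →* G).range := by
        rw [SemidirectProduct.range_inl_eq_ker_rightHom]
        exact hd
      rw [← hl, ← map_pow, aux_pow p V hV l, map_one]
    have h2 : (inr d : G) ^ p = 1 := by
      apply f.injective
      rw [map_pow, h1, map_one]
    have h3 : d ^ p = 1 := inr_injective (by rw [map_pow, h2, map_one] :
      (inr (d ^ p) : G) = inr 1)
    exact aux_D1 p D hpD d h3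
  have hrbij := Finite.injective_iff_bijective.mp hrinj
  set e := MulEquiv.ofBijective r hrbij with he
  set s : D →* G := (f.toMonoidHom.comp inr).comp e.symm.toMonoidHom with hs
  have hse : ∀ d, s (e d) = f (inr d) := by
    intro d
    show f (inr (e.symm (e d))) = f (inr d)
    rw [e.symm_apply_apply]
  have hsr : ∀ d, (s d).right = d := by
    intro d
    show r (e.symm d) = d
    exact e.apply_symm_apply d
  set w : D → V := fun d => Multiplicative.toAdd (s d).left with hw
  have hcoc : ∀ d₁ d₂, w (d₁ * d₂) = w d₁ + ψ d₁ (w d₂) := by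
    intro d₁ d₂
    have h : (s (d₁ * d₂)).left
        = (s d₁).left * (addAutToMulAut.comp ψ) d₁ (s d₂).left := by
      rw [map_mul, SemidirectProduct.mul_left, hsr d₁]
    have h2 := congrArg Multiplicative.toAdd h
    simpa [hw, hφ] using h2
  set σ : V := ∑ d : D, w d with hσ
  have hn : ∀ d : D, (Nat.card D) • w d = σ - ψ d σ := by
    intro d
    have h1 : ∑ x : D, w (d * x) = σ :=
      Fintype.sum_equiv (Equiv.mulLeft d) _ _ (fun x => rfl)
    have h2 : ∑ x : D, w (d * x) = (Fintype.card D) • w d + ψ d σ := by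
      simp only [hcoc d]
      rw [Finset.sum_add_distrib, Finset.sum_const, Finset.card_univ, hσ, ← map_sum]
    rw [h2] at h1
    rw [Nat.card_eq_fintype_card]
    exact eq_sub_of_add_eq h1
  set n := Nat.card D with hnn
  have hcop : Nat.gcd n p = 1 :=
    Nat.Coprime.symm ((Fact.out : p.Prime).coprime_iff_not_dvd.mpr hpD)
  have hbez : (1 : ℤ) = n * Nat.gcdA n p + p * Nat.gcdB n p := by
    have h := Nat.gcd_eq_gcd_ab n p
    rw [hcop] at h
    exact_mod_cast h
  set a := Nat.gcdA n p with ha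
  set v : V := a • σ with hv
  have hwv : ∀ d, w d = v - ψ d v := by
    intro d
    have h0 : (p : ℤ) • w d = 0 := by
      rw [natCast_zsmul]
      exact hV _
    calc w d = (1 : ℤ) • w d := (one_smul _ _).symm
      _ = ((n : ℤ) * a + (p : ℤ) * Nat.gcdB n p) • w d := by rw [← hbez]
      _ = a • ((n : ℤ) • w d) + Nat.gcdB n p • ((p : ℤ) • w d) := by
          rw [add_smul, mul_comm (n : ℤ), mul_comm (p : ℤ), mul_smul, mul_smul]
      _ = a • ((n : ℤ) • w d) := by rw [h0, smul_zero, add_zero]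
      _ = a • (σ - ψ d σ) := by rw [natCast_zsmul, hn d]
      _ = v - ψ d v := by rw [smul_sub, hv, map_zsmul]
  refine ⟨Multiplicative.ofAdd v, ?_⟩
  set t := MulAut.conj ((inl (Multiplicative.ofAdd v)) : G) with ht
  have htd : ∀ d : D, t (inr d) = s d := by
    intro d
    rw [ht, aux_conj_inr V D ψ]
    conv_rhs => rw [← SemidirectProduct.inl_left_mul_inr_right (s d)]
    rw [hsr d]
    refine congrArg (· * inr d) (congrArg inl ?_)
    apply Multiplicative.toAdd.injective
    show Multiplicative.toAdd _ = w d
    rw [hwv d]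
    simp only [toAdd_mul, toAdd_inv, hφ, toAdd_ofAdd, sub_eq_add_neg]
  rw [MulAction.mem_stabilizer_iff, mul_smul, inv_smul_eq_iff]
  ext x
  simp only [Subgroup.mem_pointwise_smul_iff_inv_smul_mem, MulAut.smul_def, MonoidHom.mem_range]
  constructor
  · rintro ⟨d, hd⟩
    refine ⟨e d, ?_⟩
    have hx : x = f (inr d) := by
      rw [hd]
      simp [MulAut.inv_def]
    rw [hx, ← hse d, ← htd (e d)]
    simp [MulAut.inv_def]
  · rintro ⟨d, hd⟩
    refine ⟨e.symm d, ?_⟩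
    have hx : x = t (inr d) := by
      rw [hd]
      simp [MulAut.inv_def]
    rw [hx, htd d]
    show inr (e.symm d) = f⁻¹ (f (inr (e.symm d)))
    simp [MulAut.inv_def]

end Aux

/-- Let `G = V ⋊_ψ D` with `V = Z_p^d`, `p ∤ |D|`, `ψ` irreducible non-trivial, and
`A = Aut(G)`. Then `A = Inn_G(V) ⋊ N_A(D)`, where `Inn_G(V)` is normal in `A` and
isomorphic to `V`. -/
theorem stmt_9 (p : ℕ) [Fact p.Prime]
    (V : Type) [AddCommGroup V] [Finite V] (hV : ∀ v : V, p • v = 0)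
    (D : Type) [Group D] [Finite D] (hpD : ¬ p ∣ Nat.card D)
    (ψ : D →* Multiplicative (AddAut V))
    (hirr : ∀ W : AddSubgroup V, (∀ g, ∀ v ∈ W, (ψ g).toAdd v ∈ W) → W = ⊥ ∨ W = ⊤)
    (hnt : ∃ g v, (ψ g).toAdd v ≠ v) :
    ∀ (InnV NA : Subgroup (MulAut (Multiplicative V ⋊[addAutToMulAut.comp ψ] D))),
      InnV = (MulAut.conj.comp SemidirectProduct.inl).range →
      NA = MulAction.stabilizer (MulAut (Multiplicative V ⋊[addAutToMulAut.comp ψ] D))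
        (SemidirectProduct.inr.range :
          Subgroup (Multiplicative V ⋊[addAutToMulAut.comp ψ] D)) →
      InnV.Normal ∧ InnV ⊓ NA = ⊥ ∧ InnV ⊔ NA = ⊤ ∧
        Nonempty (InnV ≃* Multiplicative V) := by
  intro InnV NA hInnV hNA
  subst hInnV hNA
  open SemidirectProduct in
  have hfixpt : ∀ u : Multiplicative V, (∀ d : D, (addAutToMulAut.comp ψ) d u = u) → u = 1 := by
    intro u hu
    have : Multiplicative.toAdd u = 0 := by
      apply aux_fix V D ψ hirr hnt
      intro d
      have h := congrArg Multiplicative.toAdd (hu d)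
      simpa using h
    simpa using congrArg Multiplicative.ofAdd this
  have hker : ∀ u : Multiplicative V,
      (∀ d : D, MulAut.conj
          ((inl u : Multiplicative V ⋊[addAutToMulAut.comp ψ] D)) (inr d) ∈
        (inr : D →* Multiplicative V ⋊[addAutToMulAut.comp ψ] D).range) → u = 1 := by
    intro u hu
    apply hfixpt
    intro d
    obtain ⟨d', hd'⟩ := hu d
    rw [aux_conj_inr V D ψ] at hd'
    have hleft := congrArg SemidirectProduct.left hd'
    simp only [SemidirectProduct.left_inr, SemidirectProduct.mul_left,
      SemidirectProduct.left_inl, SemidirectProduct.right_inl, map_one,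
      MulAut.one_apply, mul_one] at hleft
    rw [eq_comm, mul_inv_eq_one] at hleft
    exact hleft.symm
  refine ⟨?_, ?_, ?_, ?_⟩
  · constructor
    intro m hm g
    obtain ⟨u, rfl⟩ := hm
    have h1 : (g ((inl u : Multiplicative V ⋊[addAutToMulAut.comp ψ] D))) ^ p = 1 := by
      rw [← map_pow, ← map_pow, aux_pow p V hV u, map_one, map_one]
    obtain ⟨u', hu'⟩ := aux_mem_inl p V hV D hpD ψ _ h1
    refine ⟨u', ?_⟩
    show MulAut.conj (inl u') = _
    rw [hu']
    exact (aux_conj_conj g (inl u)).symm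
  · rw [eq_bot_iff]
    rintro x ⟨hx1, hx2⟩
    obtain ⟨u, rfl⟩ := hx1
    rw [Subgroup.mem_bot]
    have hu : u = 1 := by
      apply hker
      intro d
      have hmem := Subgroup.smul_mem_pointwise_smul
        ((inr d : Multiplicative V ⋊[addAutToMulAut.comp ψ] D))
        (((MulAut.conj.comp inl) u : MulAut (Multiplicative V ⋊[addAutToMulAut.comp ψ] D)))
        inr.range ⟨d, rfl⟩
      rw [MulAction.mem_stabilizer_iff.mp hx2] at hmem
      simpa [MulAut.smul_def] using hmem
    rw [hu]
    show MulAut.conj (inl 1) = 1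
    rw [map_one, map_one]
  · rw [eq_top_iff]
    intro f _
    obtain ⟨v, hv⟩ := aux_sup p V hV D hpD ψ f
    have hf : f = (MulAut.conj (inl v)) * ((MulAut.conj (inl v))⁻¹ * f) :=
      (mul_inv_cancel_left _ _).symm
    rw [hf]
    exact Subgroup.mul_mem_sup ⟨v, rfl⟩ hv
  · have hinj : Function.Injective
        (MulAut.conj.comp (inl : Multiplicative V →*
          Multiplicative V ⋊[addAutToMulAut.comp ψ] D)) := by
      rw [injective_iff_map_eq_one]
      intro u hu
      apply hker
      intro d
      have h := congrArg (fun (q : MulAut (Multiplicative V ⋊[addAutToMulAut.comp ψ] D)) =>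
        q (inr d)) hu
      simp only [MulAut.one_apply] at h
      exact ⟨d, h.symm⟩
    exact ⟨(MonoidHom.ofInjective hinj).symm⟩
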